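/- arXiv:1806.05403 — 7 statements merged into one kernel-verified Lean document; each statement's English description precedes it below -/
import Mathlib

section
/- Let β > 0. When the β-perceptron algorithm terminates on a dataset with optimal margin ε* > 0 and max norm R, its output w satisfies min_i y_i (w·x_i)/||w|| ≥ β ε*/(2β + R²), i.e., the normalized output achieves margin at least βε*/(2β+R²). -/
open scoped RealInnerProductSpace

theorem beta_perceptron_margin {d m : ℕ} (β : ℝ) (hβ : 0 < β)
    (x : Fin m → EuclideanSpace ℝ (Fin d)) (y : Fin m → ℝ)
    (hy : ∀ i, y i = 1 ∨ y i = -1)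
    (wstar : EuclideanSpace ℝ (Fin d)) (hwstar : ‖wstar‖ = 1)
    (εstar R : ℝ) (hε : 0 < εstar)
    (hmargin : ∀ i, εstar ≤ y i * ⟪wstar, x i⟫)
    (hR : ∀ i, ‖x i‖ ≤ R)
    (T : ℕ) (w : ℕ → EuclideanSpace ℝ (Fin d)) (idx : ℕ → Fin m)
    (h0 : w 0 = 0)
    (hrun : ∀ t < T, y (idx t) * ⟪w t, x (idx t)⟫ < β ∧
      w (t + 1) = w t + y (idx t) • x (idx t))
    (hstop : ∀ i, β ≤ y i * ⟪w T, x i⟫) :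
    ∀ i, β * εstar / (2 * β + R ^ 2) ≤ y i * ⟪w T, x i⟫ / ‖w T‖ := by
  intro i
  have hR0 : 0 ≤ R := le_trans (norm_nonneg _) (hR i)
  have hden : 0 < 2 * β + R ^ 2 := by positivity
  -- w T ≠ 0
  have hwT0 : w T ≠ 0 := by
    intro h
    have := hstop i
    rw [h] at this
    simp only [inner_zero_left, mul_zero] at this
    linarith
  have hwTpos : 0 < ‖w T‖ := norm_pos_iff.mpr hwT0
  -- Lemma A
  have hA : ∀ t, t ≤ T → (t : ℝ) * εstar ≤ ⟪wstar, w t⟫ := by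
    intro t
    induction t with
    | zero => intro _; simp [h0]
    | succ t ih =>
      intro ht
      have ht' : t < T := ht
      obtain ⟨_, hw⟩ := hrun t ht'
      rw [hw, inner_add_right, real_inner_smul_right]
      have h1 := hmargin (idx t)
      have h2 := ih (le_of_lt ht')
      push_cast
      linarith
  -- Lemma B
  have hB : ∀ t, t ≤ T → ‖w t‖ ^ 2 ≤ (t : ℝ) * (2 * β + R ^ 2) := by
    intro t
    induction t with
    | zero => intro _; simp [h0]
    | succ t ih =>
      intro ht
      have ht' : t < T := ht
      obtain ⟨hlt, hw⟩ := hrun t ht'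
      have hy2 : (y (idx t)) ^ 2 = 1 := by
        rcases hy (idx t) with h | h <;> rw [h] <;> norm_num
      have hx2 : ‖x (idx t)‖ ^ 2 ≤ R ^ 2 := by
        have := hR (idx t)
        nlinarith [norm_nonneg (x (idx t))]
      have hexp : ‖w (t + 1)‖ ^ 2 =
          ‖w t‖ ^ 2 + 2 * (y (idx t) * ⟪w t, x (idx t)⟫)
            + (y (idx t)) ^ 2 * ‖x (idx t)‖ ^ 2 := by
        rw [hw, norm_add_sq_real, real_inner_smul_right, norm_smul]
        rw [mul_pow]
        rw [Real.norm_eq_abs, sq_abs]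
      have h2 := ih (le_of_lt ht')
      push_cast
      nlinarith
  -- combine
  have hAT := hA T le_rfl
  have hBT := hB T le_rfl
  have hcs : ⟪wstar, w T⟫ ≤ ‖w T‖ := by
    have := real_inner_le_norm wstar (w T)
    rwa [hwstar, one_mul] at this
  have hTle : (T : ℝ) * εstar ≤ ‖w T‖ := le_trans hAT hcs
  -- ‖w T‖ * εstar ≤ 2β + R²
  have hkey : ‖w T‖ * εstar ≤ 2 * β + R ^ 2 := by
    nlinarith
  -- final
  rw [div_le_div_iff₀ hden hwTpos]
  have hβi := hstop i
  nlinarith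
end

section
/- Suppose all examples have norm at most 1 and optimal margin ε* ∈ (0,1]. Fix α ∈ (1,2). The ∞-perceptron algorithm, which at step t updates on an example with y_i w^(t)·x_i ≤ β_t where β_t = 0.5((t+1)^α − t^α − 1), performs at most (1/ε*)^{2/(2−α)} updates. -/
open scoped RealInnerProductSpace

theorem infty_perceptron_update_bound {d m : ℕ} (α : ℝ) (hα1 : 1 < α) (hα2 : α < 2)
    (x : Fin m → EuclideanSpace ℝ (Fin d)) (y : Fin m → ℝ)
    (hy : ∀ i, y i = 1 ∨ y i = -1)
    (hnorm : ∀ i, ‖x i‖ ≤ 1)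
    (wstar : EuclideanSpace ℝ (Fin d)) (hwstar : ‖wstar‖ = 1)
    (εstar : ℝ) (hε0 : 0 < εstar) (hε1 : εstar ≤ 1)
    (hmargin : ∀ i, εstar ≤ y i * ⟪wstar, x i⟫)
    (T : ℕ) (w : ℕ → EuclideanSpace ℝ (Fin d)) (idx : ℕ → Fin m)
    (h0 : w 0 = 0)
    (hrun : ∀ t < T,
      y (idx t) * ⟪w t, x (idx t)⟫ ≤ 0.5 * (((t : ℝ) + 1) ^ α - (t : ℝ) ^ α - 1) ∧
      w (t + 1) = w t + y (idx t) • x (idx t)) :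
    (T : ℝ) ≤ (1 / εstar) ^ (2 / (2 - α)) := by
  have habs : ∀ i, |y i| = 1 := by
    intro i; rcases hy i with h | h <;> simp [h]
  -- norm bound
  have hB : ∀ t ≤ T, ‖w t‖ ^ 2 ≤ (t : ℝ) ^ α := by
    intro t ht
    induction t with
    | zero => simp [h0, Real.zero_rpow (by linarith : α ≠ 0)]
    | succ t ih =>
      obtain ⟨hle, heq⟩ := hrun t ht
      have ih' := ih (le_of_lt (Nat.lt_of_succ_le ht))
      rw [heq, norm_add_sq_real]
      have h1 : ⟪w t, y (idx t) • x (idx t)⟫ = y (idx t) * ⟪w t, x (idx t)⟫ :=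
        real_inner_smul_right _ _ _
      have h2 : ‖y (idx t) • x (idx t)‖ = ‖x (idx t)‖ := by
        rw [norm_smul, Real.norm_eq_abs, habs, one_mul]
      have h3 : ‖x (idx t)‖ ^ 2 ≤ 1 := by
        nlinarith [hnorm (idx t), norm_nonneg (x (idx t))]
      rw [h1, h2]
      push_cast
      linarith
  -- inner product bound
  have hA : ∀ t ≤ T, (t : ℝ) * εstar ≤ ⟪wstar, w t⟫ := by
    intro t ht
    induction t with
    | zero => simp [h0]
    | succ t ih =>
      obtain ⟨hle, heq⟩ := hrun t ht
      have ih' := ih (le_of_lt (Nat.lt_of_succ_le ht))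
      rw [heq, inner_add_right, real_inner_smul_right]
      have := hmargin (idx t)
      push_cast
      linarith
  have hA' := hA T le_rfl
  have hB' := hB T le_rfl
  have hCS : ⟪wstar, w T⟫ ≤ ‖w T‖ := by
    calc ⟪wstar, w T⟫ ≤ ‖wstar‖ * ‖w T‖ := real_inner_le_norm _ _
      _ = ‖w T‖ := by rw [hwstar, one_mul]
  have hrT : (0:ℝ) ≤ (T:ℝ) := Nat.cast_nonneg T
  have hsq : ((T:ℝ) ^ (α/2)) ^ 2 = (T:ℝ) ^ α := by
    rw [← Real.rpow_natCast ((T:ℝ) ^ (α/2)) 2, ← Real.rpow_mul hrT]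
    norm_num
  have h2 : ‖w T‖ ≤ (T:ℝ) ^ (α/2) := by
    apply le_of_pow_le_pow_left₀ (two_ne_zero) (Real.rpow_nonneg hrT _)
    rw [hsq]; exact hB'
  have hkey : (T:ℝ) * εstar ≤ (T:ℝ) ^ (α/2) := le_trans (le_trans hA' hCS) h2
  rcases Nat.eq_zero_or_pos T with hT0 | hTpos
  · subst hT0
    simp only [Nat.cast_zero]
    positivity
  · have hTpos' : (0:ℝ) < (T:ℝ) := by exact_mod_cast hTpos
    have h2α : (0:ℝ) < 2 - α := by linarith
    have hstep : (T:ℝ) ^ ((2-α)/2) ≤ 1 / εstar := by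
      rw [le_div_iff₀ hε0]
      have : (T:ℝ) ^ ((2-α)/2) * εstar * (T:ℝ) ≤ (T:ℝ) ^ ((2-α)/2) * (T:ℝ) ^ (α/2) := by
        have hnn : (0:ℝ) ≤ (T:ℝ) ^ ((2-α)/2) := Real.rpow_nonneg hrT _
        calc (T:ℝ) ^ ((2-α)/2) * εstar * (T:ℝ) = (T:ℝ) ^ ((2-α)/2) * ((T:ℝ) * εstar) := by ring
          _ ≤ (T:ℝ) ^ ((2-α)/2) * (T:ℝ) ^ (α/2) := by
              exact mul_le_mul_of_nonneg_left hkey hnn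
      have hmul : (T:ℝ) ^ ((2-α)/2) * (T:ℝ) ^ (α/2) = (T:ℝ) := by
        rw [← Real.rpow_add hTpos', show (2-α)/2 + α/2 = 1 by ring, Real.rpow_one]
      rw [hmul] at this
      have := le_of_mul_le_mul_right (by linarith [this] : (T:ℝ) ^ ((2-α)/2) * εstar * (T:ℝ) ≤ 1 * (T:ℝ)) hTpos'
      linarith
    have hexp : (2-α)/2 * (2/(2-α)) = 1 := by
      field_simp
    calc (T:ℝ) = ((T:ℝ) ^ ((2-α)/2)) ^ (2/(2-α)) := by
          rw [← Real.rpow_mul hrT, hexp, Real.rpow_one]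
      _ ≤ (1 / εstar) ^ (2/(2-α)) := by
          exact Real.rpow_le_rpow (Real.rpow_nonneg hrT _) hstep (by positivity)
end

section
/- For α ∈ (1,2), the function f(t) = ((t+1)^α − t^α − 1)/(2 t^{α/2}) is non-increasing on t ≥ 1. -/
open Real

lemma key_ineq {β t : ℝ} (hβ0 : 0 < β) (hβ1 : β < 1) (ht : 1 ≤ t) :
    (t - 1) * (t + 1) ^ β ≤ t ^ (β + 1) - 1 := by
  have ht0 : (0:ℝ) < t := lt_of_lt_of_le one_pos ht
  -- Bernoulli 1: (1 + 1/t)^β ≤ 1 + β/t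
  have hb1 : (1 + 1/t) ^ β ≤ 1 + β * (1/t) := by
    have h : (0:ℝ) ≤ 1/t := by positivity
    exact rpow_one_add_le_one_add_mul_self (by linarith) hβ0.le hβ1.le
  -- Bernoulli 2: t^(1-β) ≤ 1 + (1-β)*(t-1)
  have hb2 : t ^ (1 - β) ≤ 1 + (1 - β) * (t - 1) := by
    have := rpow_one_add_le_one_add_mul_self (by linarith : (-1:ℝ) ≤ t - 1)
      (by linarith : (0:ℝ) ≤ 1 - β) (by linarith : (1:ℝ) - β ≤ 1)
    simpa using this
  have h1 : (t + 1) ^ β ≤ t ^ β + β * t ^ (β - 1) := by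
    have he : (t + 1 : ℝ) = t * (1 + 1/t) := by field_simp
    rw [he, Real.mul_rpow ht0.le (by positivity)]
    have := mul_le_mul_of_nonneg_left hb1 (Real.rpow_nonneg ht0.le β)
    calc t ^ β * (1 + 1/t) ^ β ≤ t ^ β * (1 + β * (1/t)) := this
      _ = t ^ β + β * (t ^ β / t) := by ring
      _ = t ^ β + β * t ^ (β - 1) := by
          rw [Real.rpow_sub ht0, Real.rpow_one]
  have h2 : 1 ≤ (1 - β) * t ^ β + β * t ^ (β - 1) := by
    have hfac : (1 - β) * t ^ β + β * t ^ (β - 1) = t ^ (β - 1) * ((1 - β) * t + β) := by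
      rw [Real.rpow_sub ht0, Real.rpow_one]
      field_simp
    rw [hfac]
    have h3 : t ^ (1 - β) ≤ (1 - β) * t + β := by linarith
    calc (1:ℝ) = t ^ (β - 1) * t ^ (1 - β) := by
          rw [← Real.rpow_add ht0]; norm_num
      _ ≤ t ^ (β - 1) * ((1 - β) * t + β) :=
          mul_le_mul_of_nonneg_left h3 (Real.rpow_nonneg ht0.le _)
  have htβ : t * t ^ β = t ^ (β + 1) := by
    rw [Real.rpow_add ht0, Real.rpow_one]; ring
  have htβ1 : t * t ^ (β - 1) = t ^ β := by
    rw [Real.rpow_sub ht0, Real.rpow_one]; field_simp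
  calc (t - 1) * (t + 1) ^ β ≤ (t - 1) * (t ^ β + β * t ^ (β - 1)) :=
        mul_le_mul_of_nonneg_left h1 (by linarith)
    _ = t ^ (β + 1) - ((1 - β) * t ^ β + β * t ^ (β - 1)) := by
        linear_combination htβ + β * htβ1
    _ ≤ t ^ (β + 1) - 1 := by linarith

theorem margin_fn_antitone (α : ℝ) (hα1 : 1 < α) (hα2 : α < 2) :
    AntitoneOn (fun t : ℝ => ((t + 1) ^ α - t ^ α - 1) / (2 * t ^ (α / 2)))
      (Set.Ici (1 : ℝ)) := by
  have hα0 : 0 < α := by linarith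
  have hhas : ∀ x : ℝ, 1 < x →
      HasDerivAt (fun t : ℝ => ((t + 1) ^ α - t ^ α - 1) / (2 * t ^ (α / 2)))
        (((1 * α * (x + 1) ^ (α - 1) - α * x ^ (α - 1)) * (2 * x ^ (α / 2)) -
            ((x + 1) ^ α - x ^ α - 1) * (2 * (α / 2 * x ^ (α / 2 - 1)))) /
          (2 * x ^ (α / 2)) ^ 2) x := by
    intro x hx1
    have hx0 : (0:ℝ) < x := by linarith
    have hx10 : (0:ℝ) < x + 1 := by linarith
    have hA : HasDerivAt (fun t : ℝ => (t + 1) ^ α) (1 * α * (x + 1) ^ (α - 1)) x :=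
      HasDerivAt.rpow_const ((hasDerivAt_id x).add_const 1) (Or.inl hx10.ne')
    have hB : HasDerivAt (fun t : ℝ => t ^ α) (α * x ^ (α - 1)) x :=
      Real.hasDerivAt_rpow_const (Or.inl hx0.ne')
    have hN : HasDerivAt (fun t : ℝ => (t + 1) ^ α - t ^ α - 1)
        (1 * α * (x + 1) ^ (α - 1) - α * x ^ (α - 1)) x := (hA.sub hB).sub_const 1
    have hD : HasDerivAt (fun t : ℝ => 2 * t ^ (α / 2)) (2 * (α / 2 * x ^ (α / 2 - 1))) x :=
      (Real.hasDerivAt_rpow_const (Or.inl hx0.ne')).const_mul 2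
    have hD0 : 2 * x ^ (α / 2) ≠ 0 := by positivity
    exact hN.div hD hD0
  apply antitoneOn_of_deriv_nonpos (convex_Ici 1)
  · -- continuity
    apply ContinuousOn.div
    · apply ContinuousOn.sub
      apply ContinuousOn.sub
      · exact fun x hx => (((continuous_id.add continuous_const).continuousAt).rpow_const
          (Or.inr hα0.le)).continuousWithinAt
      · exact fun x hx => (continuousAt_id.rpow_const (Or.inr hα0.le)).continuousWithinAt
      · exact continuousOn_const
    · exact continuousOn_const.mul
        (fun x hx => (continuousAt_id.rpow_const (Or.inr (by positivity))).continuousWithinAt)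
    · intro x hx
      have hx0 : (0:ℝ) < x := lt_of_lt_of_le one_pos hx
      positivity
  · intro x hx
    rw [interior_Ici] at hx
    exact (hhas x hx).differentiableAt.differentiableWithinAt
  · intro x hx
    rw [interior_Ici] at hx
    have hx1 : (1:ℝ) < x := hx
    have hx0 : (0:ℝ) < x := by linarith
    have hx10 : (0:ℝ) < x + 1 := by linarith
    rw [(hhas x hx).deriv]
    have hkey : (x - 1) * (x + 1) ^ (α - 1) ≤ x ^ α - 1 := by
      have h := key_ineq (β := α - 1) (t := x) (by linarith) (by linarith) hx1.le
      have he : α - 1 + 1 = α := by ring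
      rwa [he] at h
    -- rewrite powers
    have hxa : x ^ α = x * x ^ (α - 1) := by
      rw [Real.rpow_sub hx0, Real.rpow_one]; field_simp
    have hya : (x + 1) ^ α = (x + 1) * (x + 1) ^ (α - 1) := by
      rw [Real.rpow_sub hx10, Real.rpow_one]; field_simp
    have hcd : x ^ (α / 2) = x * x ^ (α / 2 - 1) := by
      rw [Real.rpow_sub hx0, Real.rpow_one]; field_simp
    have hd : (0:ℝ) < x ^ (α / 2 - 1) := Real.rpow_pos_of_pos hx0 _
    rw [hxa] at hkey
    apply div_nonpos_of_nonpos_of_nonneg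
    · have hmul : α * x ^ (α / 2 - 1) * ((x - 1) * (x + 1) ^ (α - 1))
          ≤ α * x ^ (α / 2 - 1) * (x * x ^ (α - 1) - 1) :=
        mul_le_mul_of_nonneg_left hkey (by positivity)
      have heq : (1 * α * (x + 1) ^ (α - 1) - α * x ^ (α - 1)) * (2 * x ^ (α / 2))
            - ((x + 1) ^ α - x ^ α - 1) * (2 * (α / 2 * x ^ (α / 2 - 1)))
          = α * x ^ (α / 2 - 1) * ((x - 1) * (x + 1) ^ (α - 1))
            - α * x ^ (α / 2 - 1) * (x * x ^ (α - 1) - 1) := by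
        rw [hcd, hya, hxa]
        ring
      linarith
    · positivity
end

section
/- For α ∈ (1,2) and real t ≥ 1, the inequality (t+1)^{α−1}(t−1) − t^α + 1 ≤ 0 holds. -/
theorem margin_deriv_ineq (α t : ℝ) (hα1 : 1 < α) (hα2 : α < 2) (ht : 1 ≤ t) :
    (t + 1) ^ (α - 1) * (t - 1) - t ^ α + 1 ≤ 0 := by
  have ht0 : (0:ℝ) < t := lt_of_lt_of_le one_pos ht
  have ht0' : (0:ℝ) ≤ t := ht0.le
  -- Step A (Bernoulli): (t+1)^(α-1) ≤ t^(α-1) + (α-1) * t^(α-2)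
  have hbern : (t + 1) ^ (α - 1) ≤ t ^ (α - 1) + (α - 1) * t ^ (α - 2) := by
    have hs : (-1:ℝ) ≤ 1 / t := by
      have : (0:ℝ) ≤ 1 / t := by positivity
      linarith
    have h1 : (1 + 1 / t) ^ (α - 1) ≤ 1 + (α - 1) * (1 / t) :=
      rpow_one_add_le_one_add_mul_self hs (by linarith) (by linarith)
    have key : (t + 1) ^ (α - 1) = t ^ (α - 1) * (1 + 1 / t) ^ (α - 1) := by
      rw [← Real.mul_rpow ht0' (by positivity)]
      congr 1
      field_simp
    rw [key]
    calc t ^ (α - 1) * (1 + 1 / t) ^ (α - 1)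
        ≤ t ^ (α - 1) * (1 + (α - 1) * (1 / t)) := by
          exact mul_le_mul_of_nonneg_left h1 (Real.rpow_nonneg ht0' _)
      _ = t ^ (α - 1) + (α - 1) * (t ^ (α - 1) / t) := by ring
      _ = t ^ (α - 1) + (α - 1) * t ^ (α - 2) := by
        rw [← Real.rpow_sub_one ht0.ne' (α - 1)]
        ring_nf
  -- Step B (AM-GM): 1 ≤ (2-α) * t^(α-1) + (α-1) * t^(α-2)
  have hamgm : (1:ℝ) ≤ (2 - α) * t ^ (α - 1) + (α - 1) * t ^ (α - 2) := by
    have h := Real.geom_mean_le_arith_mean2_weighted (w₁ := 2 - α) (w₂ := α - 1)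
      (p₁ := t ^ (α - 1)) (p₂ := t ^ (α - 2)) (by linarith) (by linarith)
      (Real.rpow_nonneg ht0' _) (Real.rpow_nonneg ht0' _) (by ring)
    calc (1:ℝ) = t ^ ((α - 1) * (2 - α) + (α - 2) * (α - 1)) := by
          rw [show (α - 1) * (2 - α) + (α - 2) * (α - 1) = 0 by ring, Real.rpow_zero]
      _ = (t ^ (α - 1)) ^ (2 - α) * (t ^ (α - 2)) ^ (α - 1) := by
          rw [Real.rpow_add ht0, Real.rpow_mul ht0', Real.rpow_mul ht0']
      _ ≤ (2 - α) * t ^ (α - 1) + (α - 1) * t ^ (α - 2) := h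
  -- combine
  have hta : t ^ (α - 1) * t = t ^ α := by
    rw [← Real.rpow_add_one ht0.ne' (α - 1)]; ring_nf
  have htb : t ^ (α - 2) * t = t ^ (α - 1) := by
    rw [← Real.rpow_add_one ht0.ne' (α - 2)]; ring_nf
  have hmul : (t + 1) ^ (α - 1) * (t - 1) ≤
      (t ^ (α - 1) + (α - 1) * t ^ (α - 2)) * (t - 1) :=
    mul_le_mul_of_nonneg_right hbern (by linarith)
  nlinarith [hmul, hamgm, hta, htb]
end

section
/- If w^(0)=0 and w^(t+1)=w^(t)+v_t with ||v_t|| ≤ 1 and w^(t)·v_t ≤ 0 for all t, then for every t ≥ 1 the average v^(t) = w^(t)/t lies in the convex hull of {v_0,...,v_{t−1}} and satisfies ||v^(t)|| ≤ 1/√t; consequently for every unit vector w there exists some v_s with v_s·w ≤ 1/√t. -/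
open scoped RealInnerProductSpace

theorem perceptron_average_iterate {d : ℕ}
    (v : ℕ → EuclideanSpace ℝ (Fin d))
    (hnorm : ∀ s, ‖v s‖ ≤ 1)
    (w : ℕ → EuclideanSpace ℝ (Fin d))
    (hw : ∀ t, w t = ∑ s ∈ Finset.range t, v s)
    (hneg : ∀ t, ⟪w t, v t⟫ ≤ 0) :
    ∀ t : ℕ, 1 ≤ t →
      ((t : ℝ)⁻¹ • w t ∈ convexHull ℝ (Set.image v (Set.Iio t)) ∧
       ‖(t : ℝ)⁻¹ • w t‖ ≤ 1 / Real.sqrt t ∧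
       ∀ u : EuclideanSpace ℝ (Fin d), ‖u‖ = 1 →
         ∃ s < t, ⟪v s, u⟫ ≤ 1 / Real.sqrt t) := by
  -- key norm bound
  have hsq : ∀ t : ℕ, ‖w t‖ ^ 2 ≤ (t : ℝ) := by
    intro t
    induction t with
    | zero =>
        simp [hw 0]
    | succ n ih =>
        have hstep : w (n + 1) = w n + v n := by
          rw [hw (n + 1), hw n, Finset.sum_range_succ]
        rw [hstep]
        have := norm_add_sq_real (w n) (v n)
        rw [this]
        have h1 : ‖v n‖ ^ 2 ≤ 1 := by
          have := hnorm n
          nlinarith [norm_nonneg (v n)]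
        have h2 := hneg n
        push_cast
        nlinarith
  have hnormw : ∀ t : ℕ, ‖w t‖ ≤ Real.sqrt t := by
    intro t
    have := hsq t
    calc ‖w t‖ = Real.sqrt (‖w t‖ ^ 2) := (Real.sqrt_sq (norm_nonneg _)).symm
      _ ≤ Real.sqrt t := Real.sqrt_le_sqrt this
  intro t ht
  have htpos : (0 : ℝ) < t := by exact_mod_cast ht
  have hsqrtpos : 0 < Real.sqrt t := Real.sqrt_pos.mpr htpos
  have hnb : ‖(t : ℝ)⁻¹ • w t‖ ≤ 1 / Real.sqrt t := by
    rw [norm_smul]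
    have : ‖w t‖ ≤ Real.sqrt t := hnormw t
    rw [Real.norm_eq_abs, abs_inv, abs_of_pos htpos]
    rw [div_eq_mul_inv, one_mul]
    calc (t : ℝ)⁻¹ * ‖w t‖ ≤ (t : ℝ)⁻¹ * Real.sqrt t := by
          exact mul_le_mul_of_nonneg_left this (by positivity)
      _ = (Real.sqrt t)⁻¹ := by
          rw [← Real.sqrt_mul_self htpos.le]
          field_simp
          rw [Real.sq_sqrt (Real.sqrt_nonneg _)]
  refine ⟨?_, hnb, ?_⟩
  · have := Finset.centerMass_mem_convexHull (Finset.range t)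
      (w := fun _ => (1 : ℝ)) (z := v) (fun i _ => zero_le_one)
      (by simp [htpos]) (fun i hi => ⟨i, Finset.mem_range.mp hi, rfl⟩)
      (s := Set.image v (Set.Iio t))
    rw [Finset.centerMass, Finset.sum_const, Finset.card_range, nsmul_eq_mul,
      mul_one] at this
    simp only [one_smul] at this
    rwa [← hw t] at this
  · intro u hu
    by_contra hcon
    push_neg at hcon
    have hsum : (Real.sqrt t)⁻¹ * t < ⟪w t, u⟫ := by
      rw [hw t, sum_inner]
      calc (Real.sqrt t)⁻¹ * t = ∑ _s ∈ Finset.range t, (1 / Real.sqrt t) := by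
            simp [mul_comm, div_eq_mul_inv]
        _ < ∑ s ∈ Finset.range t, ⟪v s, u⟫ := by
            apply Finset.sum_lt_sum_of_nonempty
            · exact ⟨0, Finset.mem_range.mpr ht⟩
            · intro i hi
              exact hcon i (Finset.mem_range.mp hi)
    have hub : ⟪w t, u⟫ ≤ Real.sqrt t := by
      calc ⟪w t, u⟫ ≤ ‖w t‖ * ‖u‖ := real_inner_le_norm _ _
        _ = ‖w t‖ := by rw [hu, mul_one]
        _ ≤ Real.sqrt t := hnormw t
    have : (Real.sqrt t)⁻¹ * t = Real.sqrt t := by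
      rw [← Real.sqrt_mul_self htpos.le]
      field_simp
      rw [Real.sq_sqrt (Real.sqrt_nonneg _)]
    linarith
end

section
/- (Sparse strategies in the point-hyperplane game) Let V ⊂ R^d be finite with max_{v∈V}||v|| = 1, and let ε* = sup_κ inf_μ E_{(v,w)∼μ×κ}[v·w] ≥ 0, where μ ranges over distributions on V and κ over finitely supported distributions on the unit sphere. Then there exists T ≥ 1/(3(ε*)²) (with T = ∞ if ε* = 0) and mixed strategies μ_1,...,μ_T for the point player such that each μ_t is supported on at most t points and for every strategy κ of the hyperplane player, E_{(v,w)∼μ_t×κ}[v·w] ≤ √(3/t). -/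
open scoped RealInnerProductSpace

/-- A finitely supported probability distribution whose support lies in `S`. -/
def IsDistOn {d : ℕ} (S : Set (EuclideanSpace ℝ (Fin d)))
    (μ : EuclideanSpace ℝ (Fin d) →₀ ℝ) : Prop :=
  (∀ x, 0 ≤ μ x) ∧ (μ.sum fun _ a => a) = 1 ∧ (↑μ.support : Set (EuclideanSpace ℝ (Fin d))) ⊆ S

/-- Expected payoff `P(μ, κ) = E_{(v,w) ∼ μ × κ} [v ⬝ w]` for the Hyperplane player. -/
noncomputable def payoff {d : ℕ} (μ κ : EuclideanSpace ℝ (Fin d) →₀ ℝ) : ℝ :=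
  μ.sum fun v a => κ.sum fun w b => a * b * ⟪v, w⟫

namespace SparseAux
variable {d : ℕ}

noncomputable def bar (μ : EuclideanSpace ℝ (Fin d) →₀ ℝ) : EuclideanSpace ℝ (Fin d) :=
  μ.sum fun v a => a • v

lemma payoff_eq (μ κ : EuclideanSpace ℝ (Fin d) →₀ ℝ) : payoff μ κ = ⟪bar μ, bar κ⟫ := by
  unfold payoff bar Finsupp.sum
  rw [sum_inner]
  refine Finset.sum_congr rfl fun v _ => ?_
  rw [inner_sum]
  refine Finset.sum_congr rfl fun w _ => ?_
  rw [real_inner_smul_left, real_inner_smul_right]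
  ring

lemma bar_norm_le {S : Set (EuclideanSpace ℝ (Fin d))} {κ : EuclideanSpace ℝ (Fin d) →₀ ℝ}
    (hκ : IsDistOn S κ) (hS : ∀ x ∈ S, ‖x‖ ≤ 1) : ‖bar κ‖ ≤ 1 := by
  obtain ⟨hpos, hsum, hsupp⟩ := hκ
  calc ‖bar κ‖ ≤ ∑ w ∈ κ.support, ‖κ w • w‖ := norm_sum_le _ _
    _ ≤ ∑ w ∈ κ.support, κ w := by
        refine Finset.sum_le_sum fun w hw => ?_
        rw [norm_smul, Real.norm_eq_abs, abs_of_nonneg (hpos w)]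
        calc κ w * ‖w‖ ≤ κ w * 1 := by
              exact mul_le_mul_of_nonneg_left (hS w (hsupp hw)) (hpos w)
          _ = κ w := mul_one _
    _ = 1 := hsum

lemma bar_single (v : EuclideanSpace ℝ (Fin d)) (c : ℝ) : bar (Finsupp.single v c) = c • v := by
  unfold bar
  rw [Finsupp.sum_single_index (by simp)]

end SparseAux

namespace SparseAux

lemma single_dist {S : Set (EuclideanSpace ℝ (Fin d))} {w : EuclideanSpace ℝ (Fin d)}
    (hw : w ∈ S) : IsDistOn S (Finsupp.single w 1) := by
  classical
  refine ⟨fun x => ?_, ?_, ?_⟩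
  · rw [Finsupp.single_apply]; split <;> norm_num
  · rw [Finsupp.sum_single_index rfl]
  · rw [Finsupp.support_single_ne_zero _ one_ne_zero]
    simpa using hw

lemma sphere_norm {w : EuclideanSpace ℝ (Fin d)}
    (hw : w ∈ Metric.sphere (0 : EuclideanSpace ℝ (Fin d)) 1) : ‖w‖ = 1 := by
  simpa using hw

lemma exists_small_inner (V : Finset (EuclideanSpace ℝ (Fin d)))
    (hnorm : ∀ v ∈ V, ‖v‖ ≤ 1) (hV : V.Nonempty)
    (εstar : ℝ)
    (hεdef : εstar = sSup {r : ℝ |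
      ∃ κ, IsDistOn (Metric.sphere (0 : EuclideanSpace ℝ (Fin d)) 1) κ ∧
        r = sInf {s : ℝ | ∃ μ, IsDistOn (↑V) μ ∧ s = payoff μ κ}})
    (w : EuclideanSpace ℝ (Fin d)) (hw : ‖w‖ = 1) :
    ∃ v ∈ V, ⟪v, w⟫ ≤ εstar := by
  obtain ⟨v₀, hv₀⟩ := id hV
  have hv₀dist : IsDistOn (↑V : Set _) (Finsupp.single v₀ 1) := single_dist (by simpa using hv₀)
  -- bound on payoffs: for μ dist on V, κ dist on sphere, |payoff μ κ| ≤ 1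
  have hbound : ∀ μ κ, IsDistOn (↑V : Set _) μ →
      IsDistOn (Metric.sphere (0 : EuclideanSpace ℝ (Fin d)) 1) κ → |payoff μ κ| ≤ 1 := by
    intro μ κ hμ hκ
    rw [payoff_eq]
    have h1 : ‖bar μ‖ ≤ 1 := bar_norm_le hμ (fun x hx => hnorm x (by simpa using hx))
    have h2 : ‖bar κ‖ ≤ 1 := bar_norm_le hκ (fun x hx => le_of_eq (sphere_norm hx))
    calc |⟪bar μ, bar κ⟫| ≤ ‖bar μ‖ * ‖bar κ‖ := abs_real_inner_le_norm _ _
      _ ≤ 1 := by nlinarith [norm_nonneg (bar μ)]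
  -- the set R is bounded above by 1
  set R := {r : ℝ | ∃ κ, IsDistOn (Metric.sphere (0 : EuclideanSpace ℝ (Fin d)) 1) κ ∧
        r = sInf {s : ℝ | ∃ μ, IsDistOn (↑V) μ ∧ s = payoff μ κ}} with hR
  have hRbdd : ∀ r ∈ R, r ≤ 1 := by
    rintro r ⟨κ, hκ, rfl⟩
    have hmem : payoff (Finsupp.single v₀ 1) κ ∈
        {s : ℝ | ∃ μ, IsDistOn (↑V : Set _) μ ∧ s = payoff μ κ} := ⟨_, hv₀dist, rfl⟩
    have hbelow : ∀ s ∈ {s : ℝ | ∃ μ, IsDistOn (↑V : Set _) μ ∧ s = payoff μ κ}, (-1:ℝ) ≤ s := by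
      rintro s ⟨μ, hμ, rfl⟩
      have := hbound μ κ hμ hκ
      linarith [neg_abs_le (payoff μ κ)]
    have h1 : sInf {s : ℝ | ∃ μ, IsDistOn (↑V : Set _) μ ∧ s = payoff μ κ} ≤
        payoff (Finsupp.single v₀ 1) κ := csInf_le ⟨-1, hbelow⟩ hmem
    have h2 := hbound _ κ hv₀dist hκ
    have h3 := le_abs_self (payoff (Finsupp.single v₀ 1) κ)
    linarith
  -- κ₀ := dirac at w
  have hwsph : w ∈ Metric.sphere (0 : EuclideanSpace ℝ (Fin d)) 1 := by simpa using hw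
  set κ₀ := Finsupp.single w (1:ℝ) with hκ₀def
  have hκ₀ : IsDistOn (Metric.sphere (0 : EuclideanSpace ℝ (Fin d)) 1) κ₀ := single_dist hwsph
  set S₀ := {s : ℝ | ∃ μ, IsDistOn (↑V : Set _) μ ∧ s = payoff μ κ₀} with hS₀
  have hr₀ : sInf S₀ ≤ εstar := by
    rw [hεdef]
    exact le_csSup ⟨1, fun r hr => hRbdd r hr⟩ ⟨κ₀, hκ₀, rfl⟩
  -- min of inner products over V
  obtain ⟨vm, hvm, hvmeq⟩ := Finset.exists_mem_eq_inf' hV (fun v => ⟪v, w⟫)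
  refine ⟨vm, hvm, ?_⟩
  rw [← hvmeq]
  refine le_trans ?_ hr₀
  refine le_csInf ⟨_, ⟨_, hv₀dist, rfl⟩⟩ ?_
  rintro s ⟨μ, ⟨hpos, hsum, hsupp⟩, rfl⟩
  rw [payoff_eq, bar_single, one_smul]
  unfold bar Finsupp.sum
  rw [sum_inner]
  have : ∀ v ∈ μ.support, μ v * V.inf' hV (fun v => ⟪v, w⟫) ≤ ⟪μ v • v, w⟫ := by
    intro v hv
    rw [real_inner_smul_left]
    exact mul_le_mul_of_nonneg_left (Finset.inf'_le _ (by simpa using hsupp hv)) (hpos v)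
  calc V.inf' hV (fun v => ⟪v, w⟫)
      = (∑ v ∈ μ.support, μ v) * V.inf' hV (fun v => ⟪v, w⟫) := by
        have hsum' : ∑ v ∈ μ.support, μ v = 1 := by rw [← hsum]; rfl
        rw [hsum']; ring
    _ = ∑ v ∈ μ.support, μ v * V.inf' hV (fun v => ⟪v, w⟫) := by rw [Finset.sum_mul]
    _ ≤ ∑ v ∈ μ.support, ⟪μ v • v, w⟫ := Finset.sum_le_sum this

end SparseAux

namespace SparseAux

noncomputable def pick (V : Finset (EuclideanSpace ℝ (Fin d))) (hV : V.Nonempty)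
    (x : EuclideanSpace ℝ (Fin d)) : EuclideanSpace ℝ (Fin d) :=
  (V.exists_min_image (fun v => ⟪x, v⟫) hV).choose

lemma pick_mem (V : Finset (EuclideanSpace ℝ (Fin d))) (hV : V.Nonempty)
    (x : EuclideanSpace ℝ (Fin d)) : pick V hV x ∈ V :=
  (V.exists_min_image (fun v => ⟪x, v⟫) hV).choose_spec.1

lemma pick_min (V : Finset (EuclideanSpace ℝ (Fin d))) (hV : V.Nonempty)
    (x : EuclideanSpace ℝ (Fin d)) : ∀ v ∈ V, ⟪x, pick V hV x⟫ ≤ ⟪x, v⟫ :=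
  (V.exists_min_image (fun v => ⟪x, v⟫) hV).choose_spec.2

noncomputable def gs (V : Finset (EuclideanSpace ℝ (Fin d))) (hV : V.Nonempty) :
    ℕ → EuclideanSpace ℝ (Fin d)
  | 0 => 0
  | n + 1 => gs V hV n + pick V hV (gs V hV n)

lemma gs_sum (V : Finset (EuclideanSpace ℝ (Fin d))) (hV : V.Nonempty) (t : ℕ) :
    gs V hV t = ∑ i ∈ Finset.range t, pick V hV (gs V hV i) := by
  induction t with
  | zero => simp [gs]
  | succ n ih => rw [Finset.sum_range_succ, ← ih]; rfl

lemma gs_norm_sq (V : Finset (EuclideanSpace ℝ (Fin d)))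
    (hnorm : ∀ v ∈ V, ‖v‖ ≤ 1) (hV : V.Nonempty)
    (εstar : ℝ) (hε0 : 0 ≤ εstar)
    (hεdef : εstar = sSup {r : ℝ |
      ∃ κ, IsDistOn (Metric.sphere (0 : EuclideanSpace ℝ (Fin d)) 1) κ ∧
        r = sInf {s : ℝ | ∃ μ, IsDistOn (↑V) μ ∧ s = payoff μ κ}})
    (t : ℕ) (ht : ∀ n < t, 3 * (n : ℝ) * εstar ^ 2 ≤ 1) :
    ‖gs V hV t‖ ^ 2 ≤ 3 * t := by
  induction t with
  | zero => simp [gs]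
  | succ n ih =>
    have ihn : ‖gs V hV n‖ ^ 2 ≤ 3 * n := ih (fun m hm => ht m (Nat.lt_succ_of_lt hm))
    set x := gs V hV n with hx
    have hstep : ⟪x, pick V hV x⟫ ≤ εstar * ‖x‖ := by
      rcases eq_or_ne x 0 with h0 | h0
      · rw [h0]; simp
      · have hxn : ‖x‖ ≠ 0 := norm_ne_zero_iff.mpr h0
        set w := ‖x‖⁻¹ • x with hwdef
        have hwnorm : ‖w‖ = 1 := norm_smul_inv_norm h0
        obtain ⟨v, hv, hvw⟩ := exists_small_inner V hnorm hV εstar hεdef w hwnorm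
        have h1 : ⟪x, v⟫ = ‖x‖ * ⟪v, w⟫ := by
          rw [hwdef, real_inner_smul_right, real_inner_comm]
          field_simp
        calc ⟪x, pick V hV x⟫ ≤ ⟪x, v⟫ := pick_min V hV x v hv
          _ = ‖x‖ * ⟪v, w⟫ := h1
          _ ≤ ‖x‖ * εstar := mul_le_mul_of_nonneg_left hvw (norm_nonneg x)
          _ = εstar * ‖x‖ := mul_comm _ _
    have hpnorm : ‖pick V hV x‖ ^ 2 ≤ 1 := by
      have := hnorm _ (pick_mem V hV x)
      nlinarith [norm_nonneg (pick V hV x)]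
    have hrec : ‖gs V hV (n+1)‖ ^ 2 ≤ ‖x‖ ^ 2 + 2 * (εstar * ‖x‖) + 1 := by
      have : gs V hV (n+1) = x + pick V hV x := rfl
      rw [this, norm_add_sq_real]
      linarith [hstep]
    -- εstar * ‖x‖ ≤ 1
    have hxsq : (εstar * ‖x‖) ^ 2 ≤ 1 := by
      have h3n := ht n (Nat.lt_succ_self n)
      nlinarith [sq_nonneg εstar]
    have hεx : εstar * ‖x‖ ≤ 1 := by
      nlinarith [mul_nonneg hε0 (norm_nonneg x), sq_nonneg (εstar * ‖x‖ - 1)]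
    push_cast
    linarith

end SparseAux

namespace SparseAux

noncomputable def μs (V : Finset (EuclideanSpace ℝ (Fin d))) (hV : V.Nonempty) (t : ℕ) :
    EuclideanSpace ℝ (Fin d) →₀ ℝ :=
  ∑ i ∈ Finset.range t, Finsupp.single (pick V hV (gs V hV i)) ((t : ℝ)⁻¹)

lemma μs_dist (V : Finset (EuclideanSpace ℝ (Fin d))) (hV : V.Nonempty) (t : ℕ) (ht : 1 ≤ t) :
    IsDistOn (↑V) (μs V hV t) := by
  classical
  have htpos : (0:ℝ) < t := by exact_mod_cast ht
  refine ⟨fun x => ?_, ?_, ?_⟩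
  · rw [μs, Finset.sum_apply']
    refine Finset.sum_nonneg fun i _ => ?_
    rw [Finsupp.single_apply]
    split <;> positivity
  · rw [μs, ← Finsupp.sum_finset_sum_index (fun _ => rfl) (fun _ _ _ => rfl)]
    rw [Finset.sum_congr rfl (fun i _ => Finsupp.sum_single_index rfl)]
    rw [Finset.sum_const, Finset.card_range, nsmul_eq_mul]
    field_simp
  · refine subset_trans (Finset.coe_subset.mpr (Finsupp.support_finset_sum)) ?_
    intro x hx
    simp only [Finset.coe_biUnion, Set.mem_iUnion] at hx
    obtain ⟨i, _, hxi⟩ := hx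
    have := Finsupp.support_single_subset (a := pick V hV (gs V hV i)) (b := ((t:ℝ)⁻¹)) hxi
    simp only [Finset.mem_singleton] at this
    simpa [this] using pick_mem V hV (gs V hV i)

lemma μs_card (V : Finset (EuclideanSpace ℝ (Fin d))) (hV : V.Nonempty) (t : ℕ) :
    (μs V hV t).support.card ≤ t := by
  classical
  calc (μs V hV t).support.card
      ≤ ((Finset.range t).biUnion fun i => (Finsupp.single (pick V hV (gs V hV i)) ((t:ℝ)⁻¹)).support).card :=
        Finset.card_le_card Finsupp.support_finset_sum
    _ ≤ ∑ i ∈ Finset.range t, (Finsupp.single (pick V hV (gs V hV i)) ((t:ℝ)⁻¹)).support.card :=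
        Finset.card_biUnion_le
    _ ≤ ∑ i ∈ Finset.range t, 1 := Finset.sum_le_sum fun i _ =>
        Finset.card_le_card Finsupp.support_single_subset
    _ = t := by simp

lemma bar_μs (V : Finset (EuclideanSpace ℝ (Fin d))) (hV : V.Nonempty) (t : ℕ) :
    bar (μs V hV t) = (t : ℝ)⁻¹ • gs V hV t := by
  rw [μs, gs_sum, Finset.smul_sum]
  unfold bar
  rw [← Finsupp.sum_finset_sum_index (fun _ => by simp) (fun a b₁ b₂ => add_smul b₁ b₂ a)]
  exact Finset.sum_congr rfl fun i _ => by rw [Finsupp.sum_single_index (by simp)]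

end SparseAux

namespace SparseAux

lemma μs_payoff (V : Finset (EuclideanSpace ℝ (Fin d))) (hV : V.Nonempty)
    (t : ℕ) (ht : 1 ≤ t) (hsq : ‖gs V hV t‖ ^ 2 ≤ 3 * t)
    (κ : EuclideanSpace ℝ (Fin d) →₀ ℝ)
    (hκ : IsDistOn (Metric.sphere (0 : EuclideanSpace ℝ (Fin d)) 1) κ) :
    payoff (μs V hV t) κ ≤ Real.sqrt (3 / t) := by
  have htpos : (0:ℝ) < t := by exact_mod_cast ht
  have hκn : ‖bar κ‖ ≤ 1 := bar_norm_le hκ (fun x hx => le_of_eq (sphere_norm hx))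
  have h1 : payoff (μs V hV t) κ ≤ ‖bar (μs V hV t)‖ := by
    rw [payoff_eq]
    calc ⟪bar (μs V hV t), bar κ⟫ ≤ ‖bar (μs V hV t)‖ * ‖bar κ‖ := real_inner_le_norm _ _
      _ ≤ ‖bar (μs V hV t)‖ * 1 := mul_le_mul_of_nonneg_left hκn (norm_nonneg _)
      _ = _ := mul_one _
  have h2 : ‖bar (μs V hV t)‖ = (t:ℝ)⁻¹ * ‖gs V hV t‖ := by
    rw [bar_μs, norm_smul, Real.norm_eq_abs, abs_of_nonneg (by positivity)]
  have h3 : ‖gs V hV t‖ ≤ Real.sqrt (3 * t) := by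
    rw [← Real.sqrt_sq (norm_nonneg (gs V hV t))]
    exact Real.sqrt_le_sqrt hsq
  have h4 : Real.sqrt (3 / t) = (t:ℝ)⁻¹ * Real.sqrt (3 * t) := by
    rw [show (3:ℝ) / t = (3 * t) / (t:ℝ)^2 by field_simp]
    rw [Real.sqrt_div (by positivity), Real.sqrt_sq htpos.le]
    field_simp
  rw [h4]
  calc payoff (μs V hV t) κ ≤ ‖bar (μs V hV t)‖ := h1
    _ = (t:ℝ)⁻¹ * ‖gs V hV t‖ := h2
    _ ≤ (t:ℝ)⁻¹ * Real.sqrt (3 * t) := mul_le_mul_of_nonneg_left h3 (by positivity)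

end SparseAux

theorem sparse_strategies {d : ℕ} (V : Finset (EuclideanSpace ℝ (Fin d)))
    (hnorm : ∀ v ∈ V, ‖v‖ ≤ 1) (hmax : ∃ v ∈ V, ‖v‖ = 1)
    (εstar : ℝ)
    (hεdef : εstar = sSup {r : ℝ |
      ∃ κ, IsDistOn (Metric.sphere (0 : EuclideanSpace ℝ (Fin d)) 1) κ ∧
        r = sInf {s : ℝ | ∃ μ, IsDistOn (↑V) μ ∧ s = payoff μ κ}})
    (hε0 : 0 ≤ εstar) :
    ∃ (T : ℕ∞) (μseq : ℕ → (EuclideanSpace ℝ (Fin d) →₀ ℝ)),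
      (εstar = 0 → T = ⊤) ∧
      (εstar ≠ 0 → ∃ T' : ℕ, T = (T' : ℕ∞) ∧ 1 / (3 * εstar ^ 2) ≤ (T' : ℝ)) ∧
      ∀ t : ℕ, 1 ≤ t → (t : ℕ∞) ≤ T →
        IsDistOn (↑V) (μseq t) ∧ (μseq t).support.card ≤ t ∧
        ∀ κ, IsDistOn (Metric.sphere (0 : EuclideanSpace ℝ (Fin d)) 1) κ →
          payoff (μseq t) κ ≤ Real.sqrt (3 / t) := by
  obtain ⟨v₁, hv₁, -⟩ := hmax
  have hV : V.Nonempty := ⟨v₁, hv₁⟩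
  by_cases hε : εstar = 0
  · refine ⟨⊤, SparseAux.μs V hV, fun _ => rfl, fun h => absurd hε h, ?_⟩
    intro t ht _
    refine ⟨SparseAux.μs_dist V hV t ht, SparseAux.μs_card V hV t, fun κ hκ => ?_⟩
    exact SparseAux.μs_payoff V hV t ht
      (SparseAux.gs_norm_sq V hnorm hV εstar hε0 hεdef t
        (fun n _ => by rw [hε]; norm_num)) κ hκ
  · have hεpos : 0 < εstar := lt_of_le_of_ne hε0 (Ne.symm hε)
    set x := 1 / (3 * εstar ^ 2) with hxdef
    refine ⟨(⌈x⌉₊ : ℕ∞), SparseAux.μs V hV, fun h => absurd h hε,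
      fun _ => ⟨⌈x⌉₊, rfl, Nat.le_ceil x⟩, ?_⟩
    intro t ht hT
    have htT : t ≤ ⌈x⌉₊ := by exact_mod_cast hT
    have hcond : ∀ n < t, 3 * (n:ℝ) * εstar ^ 2 ≤ 1 := by
      intro n hn
      have h1 : n < ⌈x⌉₊ := lt_of_lt_of_le hn htT
      have h2 : (n:ℝ) < x := Nat.lt_ceil.1 h1
      rw [hxdef] at h2
      have h3 : (0:ℝ) < 3 * εstar ^ 2 := by positivity
      rw [lt_div_iff₀ h3] at h2
      nlinarith
    refine ⟨SparseAux.μs_dist V hV t ht, SparseAux.μs_card V hV t, fun κ hκ => ?_⟩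
    exact SparseAux.μs_payoff V hV t ht
      (SparseAux.gs_norm_sq V hnorm hV εstar hε0 hεdef t hcond) κ hκ
end

section
/- Let X ⊂ R^d be a finite set of n points with max_{x∈X}||x|| = 1 and let ε > 0. The number of labelings Y : X → {±1} that are linearly separable with margin at least ε (i.e., there exists a unit vector w with Y(x)(w·x) ≥ ε for all x ∈ X) is at most (2(n+1))^{1/ε²}. -/
open scoped RealInnerProductSpace

noncomputable def vOf {d : ℕ} (X : Finset (EuclideanSpace ℝ (Fin d)))
    (p : X × Bool) : EuclideanSpace ℝ (Fin d) :=
  (if p.2 then (1:ℝ) else -1) • (p.1 : EuclideanSpace ℝ (Fin d))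

lemma perceptron {d : ℕ} (X : Finset (EuclideanSpace ℝ (Fin d)))
    (hnorm : ∀ x ∈ X, ‖x‖ ≤ 1)
    (Y : X → ℝ) (hY : ∀ x, Y x = -1 ∨ Y x = 1)
    (w0 : EuclideanSpace ℝ (Fin d)) (hw0 : ‖w0‖ = 1)
    (ε : ℝ) (hε : 0 < ε)
    (hm : ∀ x : X, ε ≤ Y x * ⟪w0, (x : EuclideanSpace ℝ (Fin d))⟫)
    (K : ℕ) (hK : K = ⌊1 / ε ^ 2⌋₊) :
    ∃ L : List (X × Bool), L.length ≤ K ∧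
      ∀ x : X, 0 < Y x * ⟪(L.map (vOf X)).sum, (x : EuclideanSpace ℝ (Fin d))⟫ := by
  classical
  -- length bound from invariants
  have lenle : ∀ L : List (X × Bool),
      (L.length : ℝ) * ε ≤ ⟪w0, (L.map (vOf X)).sum⟫ →
      ‖(L.map (vOf X)).sum‖ ^ 2 ≤ (L.length : ℝ) → L.length ≤ K := by
    intro L hA hB
    set w := (L.map (vOf X)).sum
    set t : ℝ := (L.length : ℝ) with ht
    have ht0 : 0 ≤ t := Nat.cast_nonneg _
    have h1 : t * ε ≤ ‖w‖ := by
      refine hA.trans ?_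
      calc ⟪w0, w⟫ ≤ ‖w0‖ * ‖w‖ := real_inner_le_norm _ _
        _ = ‖w‖ := by rw [hw0, one_mul]
    have h2 : (t * ε) ^ 2 ≤ t := by
      nlinarith [norm_nonneg w, mul_nonneg ht0 hε.le]
    have h3 : t ≤ 1 / ε ^ 2 := by
      rw [le_div_iff₀ (by positivity)]
      rcases eq_or_lt_of_le ht0 with h | h
      · nlinarith
      · nlinarith
    rw [hK]
    exact Nat.le_floor h3
  have key : ∀ m : ℕ, ∀ L : List (X × Bool),
      (∀ p ∈ L, (if p.2 then (1:ℝ) else -1) = Y p.1) →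
      (L.length : ℝ) * ε ≤ ⟪w0, (L.map (vOf X)).sum⟫ →
      ‖(L.map (vOf X)).sum‖ ^ 2 ≤ (L.length : ℝ) →
      L.length + m = K + 1 →
      ∃ L' : List (X × Bool), L'.length ≤ K ∧
        ∀ x : X, 0 < Y x * ⟪(L'.map (vOf X)).sum, (x : EuclideanSpace ℝ (Fin d))⟫ := by
    intro m
    induction m with
    | zero =>
      intro L hcons hA hB hlen
      have := lenle L hA hB
      omega
    | succ m ih =>
      intro L hcons hA hB hlen
      set w := (L.map (vOf X)).sum with hw
      by_cases hmis : ∃ x : X, Y x * ⟪w, (x : EuclideanSpace ℝ (Fin d))⟫ ≤ 0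
      · obtain ⟨x, hx⟩ := hmis
        set b : Bool := if Y x = 1 then true else false with hb
        have hbv : (if b then (1:ℝ) else -1) = Y x := by
          rcases hY x with h | h
          · norm_num [hb, h]
          · norm_num [hb, h]
        have hsum : ((((x, b) :: L).map (vOf X)).sum)
            = Y x • (x : EuclideanSpace ℝ (Fin d)) + w := by
          simp [vOf, hbv, hw]
        have hYx2 : Y x * Y x = 1 := by rcases hY x with h | h <;> rw [h] <;> ring
        refine ih ((x, b) :: L) ?_ ?_ ?_ ?_
        · intro p hp
          rcases List.mem_cons.1 hp with h | h
          · rw [h]; exact hbv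
          · exact hcons p h
        · rw [hsum, inner_add_right, real_inner_smul_right]
          have := hm x
          push_cast [List.length_cons]
          nlinarith
        · rw [hsum]
          have hexp : ‖Y x • (x : EuclideanSpace ℝ (Fin d)) + w‖ ^ 2
              = ‖Y x • (x : EuclideanSpace ℝ (Fin d))‖ ^ 2
                + 2 * ⟪Y x • (x : EuclideanSpace ℝ (Fin d)), w⟫ + ‖w‖ ^ 2 := by
            rw [@norm_add_sq_real]
          rw [hexp, norm_smul, real_inner_smul_left]
          have hxn : ‖(x : EuclideanSpace ℝ (Fin d))‖ ≤ 1 := hnorm _ x.2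
          have hinn : Y x * ⟪(x : EuclideanSpace ℝ (Fin d)), w⟫ ≤ 0 := by
            rwa [real_inner_comm]
          have habs : ‖Y x‖ = 1 := by
            rcases hY x with h | h <;> simp [h]
          rw [habs, one_mul]
          push_cast [List.length_cons]
          nlinarith [norm_nonneg (x : EuclideanSpace ℝ (Fin d))]
        · simp only [List.length_cons]; omega
      · push_neg at hmis
        exact ⟨L, lenle L hA hB, fun x => hmis x⟩
  refine key (K + 1) [] (by simp) (by simp) (by simp) (by simp)

theorem count_separable_labelings {d n : ℕ}
    (X : Finset (EuclideanSpace ℝ (Fin d))) (hcard : X.card = n)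
    (hnorm : ∀ x ∈ X, ‖x‖ ≤ 1) (hmax : ∃ x ∈ X, ‖x‖ = 1)
    (ε : ℝ) (hε : 0 < ε) :
    (Nat.card {Y : X → ({-1, 1} : Set ℝ) //
        ∃ w : EuclideanSpace ℝ (Fin d), ‖w‖ = 1 ∧
          ∀ x : X, ε ≤ (Y x : ℝ) * ⟪w, (x : EuclideanSpace ℝ (Fin d))⟫} : ℝ)
      ≤ (2 * ((n : ℝ) + 1)) ^ ((1 : ℝ) / ε ^ 2) := by
  classical
  set K := ⌊1 / ε ^ 2⌋₊ with hKdef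
  set S := {Y : X → ({-1, 1} : Set ℝ) //
        ∃ w : EuclideanSpace ℝ (Fin d), ‖w‖ = 1 ∧
          ∀ x : X, ε ≤ (Y x : ℝ) * ⟪w, (x : EuclideanSpace ℝ (Fin d))⟫} with hS
  have hYval : ∀ (Y : X → ({-1, 1} : Set ℝ)) (x : X),
      ((Y x : ℝ) = -1 ∨ (Y x : ℝ) = 1) := by
    intro Y x
    have h := (Y x).2
    rw [Set.mem_insert_iff, Set.mem_singleton_iff] at h
    exact h
  have hex : ∀ Y : S, ∃ L : List (X × Bool), L.length ≤ K ∧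
      ∀ x : X, 0 < (Y.1 x : ℝ) * ⟪(L.map (vOf X)).sum, (x : EuclideanSpace ℝ (Fin d))⟫ := by
    rintro ⟨Y, w, hw, hsep⟩
    exact perceptron X hnorm (fun x => (Y x : ℝ)) (hYval Y) w hw ε hε hsep K rfl
  choose L hlen hfin using hex
  set F : S → (Fin K → Option (X × Bool)) := fun Y i => (L Y)[(i : ℕ)]? with hF
  have hFinj : Function.Injective F := by
    intro Y Y' h
    have hLL : L Y = L Y' := by
      apply List.ext_getElem?
      intro i
      by_cases hi : i < K
      · exact congrFun h ⟨i, hi⟩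
      · rw [List.getElem?_eq_none ((hlen Y).trans (le_of_not_gt hi)),
          List.getElem?_eq_none ((hlen Y').trans (le_of_not_gt hi))]
    refine Subtype.ext (funext fun x => Subtype.ext ?_)
    have h1 := hfin Y x
    have h2 := hfin Y' x
    rw [hLL] at h1
    rcases hYval Y.1 x with ha | ha <;> rcases hYval Y'.1 x with hb | hb <;>
      rw [ha, hb] <;> rw [ha] at h1 <;> rw [hb] at h2 <;> nlinarith [h1, h2]
  have hcount : Nat.card S ≤ (2 * n + 1) ^ K := by
    have h := Nat.card_le_card_of_injective F hFinj
    have hc : Nat.card (Fin K → Option ({x // x ∈ X} × Bool)) = (2 * n + 1) ^ K := by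
      rw [Nat.card_eq_fintype_card, Fintype.card_fun, Fintype.card_option,
        Fintype.card_prod, Fintype.card_coe, hcard, Fintype.card_bool,
        Fintype.card_fin, show n * 2 + 1 = 2 * n + 1 by ring]
    rwa [hc] at h
  calc (Nat.card S : ℝ) ≤ ((2 * n + 1) ^ K : ℕ) := by exact_mod_cast hcount
    _ ≤ (2 * ((n : ℝ) + 1)) ^ (K : ℕ) := by
        push_cast
        exact pow_le_pow_left₀ (by positivity) (by linarith) K
    _ = (2 * ((n : ℝ) + 1)) ^ ((K : ℕ) : ℝ) := by
        rw [Real.rpow_natCast]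
    _ ≤ (2 * ((n : ℝ) + 1)) ^ ((1 : ℝ) / ε ^ 2) := by
        apply Real.rpow_le_rpow_of_exponent_le (by linarith [Nat.cast_nonneg (α := ℝ) n])
        exact Nat.floor_le (by positivity)
end
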